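/- Let G be a group generated by two elements x and y. Suppose that for every non-trivial reduced word w in the free group of rank 2 whose length is at most 21, the evaluation w(x,y) is not the identity of G (equivalently, the Cayley graph of G with respect to {x,y} has girth greater than 21). Then, with S = {e, x, x², x⁴, y, y³}, the Cayley poset P(G,S) is a Cayley representation of G; in particular G admits a Cayley representation. -/

import Mathlib

variable {G : Type*}

/-- The order relation of the Cayley poset `P(G,S)`: the underlying set is the disjoint
union of two copies of `G` (`Sum.inl g` is written `g`, `Sum.inr h` is written `h'`),
with `g < h'` iff `g⁻¹ * h ∈ S`, and no other distinct elements comparable. -/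
def cayleyLE [Group G] (S : Set G) : G ⊕ G → G ⊕ G → Prop
  | Sum.inl g, Sum.inl h => g = h
  | Sum.inl g, Sum.inr h => g⁻¹ * h ∈ S
  | Sum.inr _, Sum.inl _ => False
  | Sum.inr g, Sum.inr h => g = h

/-- The Cayley poset `P(G,S)` as a type synonym for `G ⊕ G`. -/
def CayleyPoset (G : Type*) [Group G] (S : Set G) : Type _ := G ⊕ G

instance [Group G] (S : Set G) : PartialOrder (CayleyPoset G S) where
  le x y := cayleyLE S x y
  le_refl x := by cases x <;> exact rfl
  le_trans x y z hxy hyz := by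
    cases x <;> cases y <;> cases z <;> simp_all [cayleyLE]
  le_antisymm x y hxy hyx := by
    cases x <;> cases y <;> simp_all [cayleyLE] <;> subst_vars <;> rfl

/-- The map `L(g)` on `P(G,S)`: `h ↦ g*h` on minimal points and `h' ↦ (g*h)'` on
maximal points. -/
def cayleyL [Group G] (g : G) : G ⊕ G → G ⊕ G
  | Sum.inl h => Sum.inl (g * h)
  | Sum.inr h => Sum.inr (g * h)

/-- `P(G,S)` is a Cayley representation of `G` if every order automorphism of the
Cayley poset `P(G,S)` equals `L(g)` for some `g ∈ G`. -/
def IsCayleyRep (G : Type*) [Group G] (S : Set G) : Prop :=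
  ∀ φ : CayleyPoset G S ≃o CayleyPoset G S,
    ∃ g : G, ∀ p : CayleyPoset G S, φ p = cayleyL g p

set_option linter.unusedSectionVars false
set_option linter.unusedVariables false

namespace CayleyAux

abbrev F := FreeGroup (Fin 2)
def XX : F := FreeGroup.of 0
def YY : F := FreeGroup.of 1
def St : List F := [1, XX, XX^2, XX^4, YY, YY^3]
def Kt : List F := [1, XX, XX⁻¹, XX^2, (XX^2)⁻¹]

set_option maxRecDepth 100000 in
theorem fact_mul : ∀ s ∈ St, ∀ t ∈ St, ∀ u ∈ St, ∀ v ∈ St,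
    s * t⁻¹ = u * v⁻¹ → s = u ∨ (s * t⁻¹) ∈ Kt := by decide

set_option maxRecDepth 100000 in
theorem fact_mul' : ∀ s ∈ St, ∀ t ∈ St, ∀ u ∈ St, ∀ v ∈ St,
    s⁻¹ * t = u⁻¹ * v → s = u ∨ (s⁻¹ * t) ∈ Kt := by decide

set_option maxRecDepth 100000 in
theorem fact_y5 : ∀ s ∈ St, ∀ t ∈ St, s⁻¹ * t ≠ YY^5 := by decide

theorem st_norm : ∀ s ∈ St, FreeGroup.norm s ≤ 4 := by decide
theorem kt_norm : ∀ k ∈ Kt, FreeGroup.norm k ≤ 2 := by decide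

variable {G : Type*} [Group G]

def pim (x y : G) : F →* G := FreeGroup.lift ![x, y]

@[simp] lemma piX (x y : G) : pim x y XX = x := by simp [pim, XX]
@[simp] lemma piY (x y : G) : pim x y YY = y := by simp [pim, YY]

def HG (x y : G) : Prop :=
  ∀ w : F, w ≠ 1 → (FreeGroup.toWord w).length ≤ 21 → FreeGroup.lift ![x, y] w ≠ 1

def SS (x y : G) : Set G := {1, x, x ^ 2, x ^ 4, y, y ^ 3}
def KK (x y : G) : Set G := {1, x, x⁻¹, x ^ 2, (x ^ 2)⁻¹}

variable {x y : G}

lemma inj_of (hg : HG x y) {u v : F} (hu : FreeGroup.norm u ≤ 10)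
    (hv : FreeGroup.norm v ≤ 10) (h : pim x y u = pim x y v) : u = v := by
  by_contra hne
  have h1 : u * v⁻¹ ≠ 1 := fun h' => hne (mul_inv_eq_one.mp h')
  have hlen : ((u * v⁻¹).toWord).length ≤ 21 := by
    have h2 := FreeGroup.norm_mul_le u v⁻¹
    have h3 : FreeGroup.norm v⁻¹ = FreeGroup.norm v := FreeGroup.norm_inv_eq
    simp only [FreeGroup.norm] at h2 h3 hu hv ⊢
    omega
  refine hg _ h1 hlen ?_
  show pim x y (u * v⁻¹) = 1
  rw [map_mul, map_inv, h, mul_inv_cancel]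

lemma pne (hg : HG x y) {a b : G} (u v : F) (hun : FreeGroup.norm u ≤ 10)
    (hvn : FreeGroup.norm v ≤ 10) (huv : u ≠ v)
    (ha : pim x y u = a) (hb : pim x y v = b) : a ≠ b := by
  rintro rfl
  exact huv (inj_of hg hun hvn (ha.trans hb.symm))

lemma mem_SS_lift {s : G} (hs : s ∈ SS x y) :
    ∃ st ∈ St, pim x y st = s := by
  simp only [SS, Set.mem_insert_iff, Set.mem_singleton_iff] at hs
  rcases hs with rfl | rfl | rfl | rfl | rfl | rfl
  · exact ⟨1, by decide, by simp⟩
  · exact ⟨XX, by decide, by simp⟩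
  · exact ⟨XX^2, by decide, by simp⟩
  · exact ⟨XX^4, by decide, by simp⟩
  · exact ⟨YY, by decide, by simp⟩
  · exact ⟨YY^3, by decide, by simp⟩

lemma mem_KK_lift {d : G} (hd : d ∈ KK x y) :
    ∃ k ∈ Kt, pim x y k = d := by
  simp only [KK, Set.mem_insert_iff, Set.mem_singleton_iff] at hd
  rcases hd with rfl | rfl | rfl | rfl | rfl
  · exact ⟨1, by decide, by simp⟩
  · exact ⟨XX, by decide, by simp⟩
  · exact ⟨XX⁻¹, by decide, by simp⟩
  · exact ⟨XX^2, by decide, by simp⟩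
  · exact ⟨(XX^2)⁻¹, by decide, by simp⟩

lemma pi_Kt_mem {k : F} (hk : k ∈ Kt) : pim x y k ∈ KK x y := by
  fin_cases hk <;> simp [KK]

lemma nkk (hg : HG x y) {d : G} (w : F) (hn : FreeGroup.norm w ≤ 10)
    (hk : w ∉ Kt) (heq : pim x y w = d) : d ∉ KK x y := by
  intro hmem
  obtain ⟨k, hkmem, hkeq⟩ := mem_KK_lift hmem
  exact hk (inj_of hg hn (le_trans (kt_norm k hkmem) (by norm_num))
    (heq.trans hkeq.symm) ▸ hkmem)


-- ## The two incidence relations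

/-- Two translates `gS`, `hS` share at least two points. -/
def Eg (x y : G) (g h : G) : Prop :=
  ∃ a b : G, a ≠ b ∧ g⁻¹ * a ∈ SS x y ∧ h⁻¹ * a ∈ SS x y ∧
    g⁻¹ * b ∈ SS x y ∧ h⁻¹ * b ∈ SS x y

/-- Two points lie in at least two common translates. -/
def Ep (x y : G) (a b : G) : Prop :=
  ∃ g h : G, g ≠ h ∧ g⁻¹ * a ∈ SS x y ∧ g⁻¹ * b ∈ SS x y ∧
    h⁻¹ * a ∈ SS x y ∧ h⁻¹ * b ∈ SS x y

lemma Eg_symm {g h : G} (he : Eg x y g h) : Eg x y h g := by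
  obtain ⟨a, b, hab, h1, h2, h3, h4⟩ := he
  exact ⟨a, b, hab, h2, h1, h4, h3⟩

lemma Ep_symm {a b : G} (he : Ep x y a b) : Ep x y b a := by
  obtain ⟨g, h, hgh, h1, h2, h3, h4⟩ := he
  exact ⟨g, h, hgh, h2, h1, h4, h3⟩

lemma Eg_ratio (hg : HG x y) {g h : G} (he : Eg x y g h) : g⁻¹ * h ∈ KK x y := by
  obtain ⟨a, b, hab, h1, h2, h3, h4⟩ := he
  obtain ⟨st, hstm, hst⟩ := mem_SS_lift h1
  obtain ⟨tt, httm, htt⟩ := mem_SS_lift h2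
  obtain ⟨ut, hutm, hut⟩ := mem_SS_lift h3
  obtain ⟨vt, hvtm, hvt⟩ := mem_SS_lift h4
  have hnorm : ∀ w ∈ St, ∀ w' ∈ St, FreeGroup.norm (w * w'⁻¹) ≤ 10 := by
    intro w hw w' hw'
    calc FreeGroup.norm (w * w'⁻¹) ≤ FreeGroup.norm w + FreeGroup.norm w'⁻¹ :=
          FreeGroup.norm_mul_le _ _
    _ ≤ 10 := by
        rw [FreeGroup.norm_inv_eq]
        have := st_norm w hw; have := st_norm w' hw'; omega
  have heq : pim x y (st * tt⁻¹) = pim x y (ut * vt⁻¹) := by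
    rw [map_mul, map_inv, map_mul, map_inv, hst, htt, hut, hvt]
    have e1 : (g⁻¹ * a) * (h⁻¹ * a)⁻¹ = g⁻¹ * h := by group
    have e2 : (g⁻¹ * b) * (h⁻¹ * b)⁻¹ = g⁻¹ * h := by group
    rw [e1, e2]
  have hfe : st * tt⁻¹ = ut * vt⁻¹ :=
    inj_of hg (hnorm _ hstm _ httm) (hnorm _ hutm _ hvtm) heq
  have hsu : st ≠ ut := by
    rintro rfl
    rw [hst] at hut
    exact hab (by rw [← mul_left_cancel hut])
  rcases fact_mul st hstm tt httm ut hutm vt hvtm hfe with h' | h'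
  · exact absurd h' hsu
  · have : pim x y (st * tt⁻¹) = g⁻¹ * h := by
      rw [map_mul, map_inv, hst, htt]; group
    exact this ▸ pi_Kt_mem h'

lemma Ep_ratio (hg : HG x y) {a b : G} (he : Ep x y a b) : a⁻¹ * b ∈ KK x y := by
  obtain ⟨g, h, hgh, h1, h2, h3, h4⟩ := he
  obtain ⟨st, hstm, hst⟩ := mem_SS_lift h1
  obtain ⟨tt, httm, htt⟩ := mem_SS_lift h2
  obtain ⟨ut, hutm, hut⟩ := mem_SS_lift h3
  obtain ⟨vt, hvtm, hvt⟩ := mem_SS_lift h4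
  have hnorm : ∀ w ∈ St, ∀ w' ∈ St, FreeGroup.norm (w⁻¹ * w') ≤ 10 := by
    intro w hw w' hw'
    calc FreeGroup.norm (w⁻¹ * w') ≤ FreeGroup.norm w⁻¹ + FreeGroup.norm w' :=
          FreeGroup.norm_mul_le _ _
    _ ≤ 10 := by
        rw [FreeGroup.norm_inv_eq]
        have := st_norm w hw; have := st_norm w' hw'; omega
  have heq : pim x y (st⁻¹ * tt) = pim x y (ut⁻¹ * vt) := by
    rw [map_mul, map_inv, map_mul, map_inv, hst, htt, hut, hvt]
    have e1 : (g⁻¹ * a)⁻¹ * (g⁻¹ * b) = a⁻¹ * b := by group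
    have e2 : (h⁻¹ * a)⁻¹ * (h⁻¹ * b) = a⁻¹ * b := by group
    rw [e1, e2]
  have hfe : st⁻¹ * tt = ut⁻¹ * vt :=
    inj_of hg (hnorm _ hstm _ httm) (hnorm _ hutm _ hvtm) heq
  have hsu : st ≠ ut := by
    rintro rfl
    rw [hst] at hut
    exact hgh (by
      have := mul_right_cancel hut
      exact inv_injective this)
  rcases fact_mul' st hstm tt httm ut hutm vt hvtm hfe with h' | h'
  · exact absurd h' hsu
  · have : pim x y (st⁻¹ * tt) = a⁻¹ * b := by
      rw [map_mul, map_inv, hst, htt]; group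
    exact this ▸ pi_Kt_mem h'

-- ## Helpers to refute incidences via girth

lemma notEg (hg : HG x y) {g h : G} (w : F) (hn : FreeGroup.norm w ≤ 10)
    (hk : w ∉ Kt) (heq : pim x y w = g⁻¹ * h) : ¬ Eg x y g h :=
  fun he => nkk hg w hn hk heq (Eg_ratio hg he)

lemma notEp (hg : HG x y) {a b : G} (w : F) (hn : FreeGroup.norm w ≤ 10)
    (hk : w ∉ Kt) (heq : pim x y w = a⁻¹ * b) : ¬ Ep x y a b :=
  fun he => nkk hg w hn hk heq (Ep_ratio hg he)

-- ## Positive incidences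

lemma one_mem_SS : (1 : G) ∈ SS x y := by simp [SS]
lemma x_mem_SS : x ∈ SS x y := by simp [SS]
lemma x2_mem_SS : x ^ 2 ∈ SS x y := by simp [SS]
lemma x4_mem_SS : x ^ 4 ∈ SS x y := by simp [SS]
lemma y_mem_SS : y ∈ SS x y := by simp [SS]
lemma y3_mem_SS : y ^ 3 ∈ SS x y := by simp [SS]

lemma Eg_x (hg : HG x y) (g : G) : Eg x y g (g * x) := by
  refine ⟨g * x, g * x ^ 2, ?_, ?_, ?_, ?_, ?_⟩
  · have : x ≠ x ^ 2 := pne hg XX (XX^2) (by decide) (by decide) (by decide)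
      (by simp) (by simp)
    intro h'; exact this (mul_left_cancel h')
  · have : g⁻¹ * (g * x) = x := by group
    rw [this]; exact x_mem_SS
  · have : (g * x)⁻¹ * (g * x) = 1 := by group
    rw [this]; exact one_mem_SS
  · have : g⁻¹ * (g * x ^ 2) = x ^ 2 := by group
    rw [this]; exact x2_mem_SS
  · have : (g * x)⁻¹ * (g * x ^ 2) = x := by group
    rw [this]; exact x_mem_SS

lemma Eg_x2 (hg : HG x y) (g : G) : Eg x y g (g * x ^ 2) := by
  refine ⟨g * x ^ 2, g * x ^ 4, ?_, ?_, ?_, ?_, ?_⟩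
  · have : x ^ 2 ≠ x ^ 4 := pne hg (XX^2) (XX^4) (by decide) (by decide) (by decide)
      (by simp) (by simp)
    intro h'; exact this (mul_left_cancel h')
  · have : g⁻¹ * (g * x ^ 2) = x ^ 2 := by group
    rw [this]; exact x2_mem_SS
  · have : (g * x ^ 2)⁻¹ * (g * x ^ 2) = 1 := by group
    rw [this]; exact one_mem_SS
  · have : g⁻¹ * (g * x ^ 4) = x ^ 4 := by group
    rw [this]; exact x4_mem_SS
  · have : (g * x ^ 2)⁻¹ * (g * x ^ 4) = x ^ 2 := by group
    rw [this]; exact x2_mem_SS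

lemma Ep_x (hg : HG x y) (a : G) : Ep x y a (a * x) := by
  refine ⟨a, a * x⁻¹, ?_, ?_, ?_, ?_, ?_⟩
  · have hx1 : (1 : G) ≠ x⁻¹ := pne hg 1 XX⁻¹ (by decide) (by decide) (by decide)
      (by simp) (by simp)
    intro h'
    exact hx1 (left_eq_mul.mp h').symm
  · have : a⁻¹ * a = 1 := by group
    rw [this]; exact one_mem_SS
  · have : a⁻¹ * (a * x) = x := by group
    rw [this]; exact x_mem_SS
  · have : (a * x⁻¹)⁻¹ * a = x := by group
    rw [this]; exact x_mem_SS
  · have : (a * x⁻¹)⁻¹ * (a * x) = x ^ 2 := by rw [pow_two]; group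
    rw [this]; exact x2_mem_SS

lemma Ep_x2 (hg : HG x y) (a : G) : Ep x y a (a * x ^ 2) := by
  refine ⟨a, a * (x ^ 2)⁻¹, ?_, ?_, ?_, ?_, ?_⟩
  · have hx1 : (1 : G) ≠ (x ^ 2)⁻¹ := pne hg 1 (XX^2)⁻¹ (by decide) (by decide) (by decide)
      (by simp) (by simp)
    intro h'
    exact hx1 (left_eq_mul.mp h').symm
  · have : a⁻¹ * a = 1 := by group
    rw [this]; exact one_mem_SS
  · have : a⁻¹ * (a * x ^ 2) = x ^ 2 := by group
    rw [this]; exact x2_mem_SS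
  · have : (a * (x ^ 2)⁻¹)⁻¹ * a = x ^ 2 := by group
    rw [this]; exact x2_mem_SS
  · have : (a * (x ^ 2)⁻¹)⁻¹ * (a * x ^ 2) = x ^ 4 := by group
    rw [this]; exact x4_mem_SS


-- ## Cluster membership

lemma mem_cluster_iff (p g : G) : g⁻¹ * p ∈ SS x y ↔
    g = p ∨ g = p * x⁻¹ ∨ g = p * (x^2)⁻¹ ∨ g = p * (x^4)⁻¹ ∨
    g = p * y⁻¹ ∨ g = p * (y^3)⁻¹ := by
  constructor
  · intro h
    have e : g = p * (g⁻¹ * p)⁻¹ := by group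
    simp only [SS, Set.mem_insert_iff, Set.mem_singleton_iff] at h
    rcases h with h | h | h | h | h | h <;> rw [h] at e
    · left; simpa using e
    · right; left; exact e
    · right; right; left; exact e
    · right; right; right; left; exact e
    · right; right; right; right; left; exact e
    · right; right; right; right; right; exact e
  · rintro (rfl | rfl | rfl | rfl | rfl | rfl)
    · rw [inv_mul_cancel]; exact one_mem_SS
    · have e : (p * x⁻¹)⁻¹ * p = x := by group
      rw [e]; exact x_mem_SS
    · have e : (p * (x^2)⁻¹)⁻¹ * p = x ^ 2 := by group
      rw [e]; exact x2_mem_SS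
    · have e : (p * (x^4)⁻¹)⁻¹ * p = x ^ 4 := by group
      rw [e]; exact x4_mem_SS
    · have e : (p * y⁻¹)⁻¹ * p = y := by group
      rw [e]; exact y_mem_SS
    · have e : (p * (y^3)⁻¹)⁻¹ * p = y ^ 3 := by group
      rw [e]; exact y3_mem_SS

lemma mem_points_iff (g a : G) : g⁻¹ * a ∈ SS x y ↔
    a = g ∨ a = g * x ∨ a = g * x^2 ∨ a = g * x^4 ∨ a = g * y ∨ a = g * y^3 := by
  constructor
  · intro h
    have e : a = g * (g⁻¹ * a) := by group
    simp only [SS, Set.mem_insert_iff, Set.mem_singleton_iff] at h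
    rcases h with h | h | h | h | h | h <;> rw [h] at e
    · left; simpa using e
    · right; left; exact e
    · right; right; left; exact e
    · right; right; right; left; exact e
    · right; right; right; right; left; exact e
    · right; right; right; right; right; exact e
  · rintro (rfl | rfl | rfl | rfl | rfl | rfl)
    · rw [inv_mul_cancel]; exact one_mem_SS
    · have e : g⁻¹ * (g * x) = x := by group
      rw [e]; exact x_mem_SS
    · have e : g⁻¹ * (g * x^2) = x ^ 2 := by group
      rw [e]; exact x2_mem_SS
    · have e : g⁻¹ * (g * x^4) = x ^ 4 := by group
      rw [e]; exact x4_mem_SS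
    · have e : g⁻¹ * (g * y) = y := by group
      rw [e]; exact y_mem_SS
    · have e : g⁻¹ * (g * y^3) = y ^ 3 := by group
      rw [e]; exact y3_mem_SS

-- ## rewritten positive instances

lemma Eg_x' (hg : HG x y) (g h : G) (e : g * x = h) : Eg x y g h := e ▸ Eg_x hg g
lemma Eg_x2' (hg : HG x y) (g h : G) (e : g * x ^ 2 = h) : Eg x y g h := e ▸ Eg_x2 hg g
lemma Ep_x' (hg : HG x y) (a b : G) (e : a * x = b) : Ep x y a b := e ▸ Ep_x hg a
lemma Ep_x2' (hg : HG x y) (a b : G) (e : a * x ^ 2 = b) : Ep x y a b := e ▸ Ep_x2 hg a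

section Main

variable {α β : G → G}

-- ## transfer of the incidence relations

lemma Eg_transfer (hβ : Function.Bijective β)
    (H : ∀ g h : G, g⁻¹ * h ∈ SS x y ↔ (α g)⁻¹ * β h ∈ SS x y)
    {g h : G} (he : Eg x y g h) : Eg x y (α g) (α h) := by
  obtain ⟨a, b, hab, h1, h2, h3, h4⟩ := he
  exact ⟨β a, β b, fun h' => hab (hβ.1 h'), (H g a).mp h1, (H h a).mp h2,
    (H g b).mp h3, (H h b).mp h4⟩

lemma Eg_pullback (hβ : Function.Bijective β)
    (H : ∀ g h : G, g⁻¹ * h ∈ SS x y ↔ (α g)⁻¹ * β h ∈ SS x y)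
    {g h : G} (he : Eg x y (α g) (α h)) : Eg x y g h := by
  obtain ⟨a', b', hab, h1, h2, h3, h4⟩ := he
  obtain ⟨a, rfl⟩ := hβ.2 a'
  obtain ⟨b, rfl⟩ := hβ.2 b'
  exact ⟨a, b, fun h' => hab (congrArg β h'), (H g a).mpr h1, (H h a).mpr h2,
    (H g b).mpr h3, (H h b).mpr h4⟩

lemma Ep_transfer (hα : Function.Bijective α)
    (H : ∀ g h : G, g⁻¹ * h ∈ SS x y ↔ (α g)⁻¹ * β h ∈ SS x y)
    {a b : G} (he : Ep x y a b) : Ep x y (β a) (β b) := by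
  obtain ⟨g, h, hgh, h1, h2, h3, h4⟩ := he
  exact ⟨α g, α h, fun h' => hgh (hα.1 h'), (H g a).mp h1, (H g b).mp h2,
    (H h a).mp h3, (H h b).mp h4⟩

lemma Ep_pullback (hα : Function.Bijective α)
    (H : ∀ g h : G, g⁻¹ * h ∈ SS x y ↔ (α g)⁻¹ * β h ∈ SS x y)
    {a b : G} (he : Ep x y (β a) (β b)) : Ep x y a b := by
  obtain ⟨g', h', hgh, h1, h2, h3, h4⟩ := he
  obtain ⟨g, rfl⟩ := hα.2 g'
  obtain ⟨h, rfl⟩ := hα.2 h'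
  exact ⟨g, h, fun h' => hgh (congrArg α h'), (H g a).mpr h1, (H g b).mpr h2,
    (H h a).mpr h3, (H h b).mpr h4⟩

end Main

-- ## small membership helpers

lemma clmem_one (r : G) : r⁻¹ * r ∈ SS x y := by rw [inv_mul_cancel]; exact one_mem_SS
lemma clmem_x (r : G) : (r * x⁻¹)⁻¹ * r ∈ SS x y := by
  have e : (r * x⁻¹)⁻¹ * r = x := by group
  rw [e]; exact x_mem_SS
lemma clmem_x2 (r : G) : (r * (x^2)⁻¹)⁻¹ * r ∈ SS x y := by
  have e : (r * (x^2)⁻¹)⁻¹ * r = x ^ 2 := by group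
  rw [e]; exact x2_mem_SS
lemma clmem_x4 (r : G) : (r * (x^4)⁻¹)⁻¹ * r ∈ SS x y := by
  have e : (r * (x^4)⁻¹)⁻¹ * r = x ^ 4 := by group
  rw [e]; exact x4_mem_SS
lemma clmem_y (r : G) : (r * y⁻¹)⁻¹ * r ∈ SS x y := by
  have e : (r * y⁻¹)⁻¹ * r = y := by group
  rw [e]; exact y_mem_SS
lemma clmem_y3 (r : G) : (r * (y^3)⁻¹)⁻¹ * r ∈ SS x y := by
  have e : (r * (y^3)⁻¹)⁻¹ * r = y ^ 3 := by group
  rw [e]; exact y3_mem_SS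
lemma ptmem_one (r : G) : r⁻¹ * r ∈ SS x y := clmem_one r
lemma ptmem_x (r : G) : r⁻¹ * (r * x) ∈ SS x y := by
  have e : r⁻¹ * (r * x) = x := by group
  rw [e]; exact x_mem_SS
lemma ptmem_x2 (r : G) : r⁻¹ * (r * x^2) ∈ SS x y := by
  have e : r⁻¹ * (r * x^2) = x ^ 2 := by group
  rw [e]; exact x2_mem_SS
lemma ptmem_x4 (r : G) : r⁻¹ * (r * x^4) ∈ SS x y := by
  have e : r⁻¹ * (r * x^4) = x ^ 4 := by group
  rw [e]; exact x4_mem_SS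
lemma ptmem_y (r : G) : r⁻¹ * (r * y) ∈ SS x y := by
  have e : r⁻¹ * (r * y) = y := by group
  rw [e]; exact y_mem_SS
lemma ptmem_y3 (r : G) : r⁻¹ * (r * y^3) ∈ SS x y := by
  have e : r⁻¹ * (r * y^3) = y ^ 3 := by group
  rw [e]; exact y3_mem_SS

section Main

variable {α β : G → G}

lemma hsur_cl (hα : Function.Bijective α)
    (H : ∀ g h : G, g⁻¹ * h ∈ SS x y ↔ (α g)⁻¹ * β h ∈ SS x y) (p : G) :
    ∀ g', g'⁻¹ * β p ∈ SS x y → ∃ g, g⁻¹ * p ∈ SS x y ∧ α g = g' := by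
  intro g' hgm
  obtain ⟨g, rfl⟩ := hα.2 g'
  exact ⟨g, (H g p).mpr hgm, rfl⟩

/-- an isolated vertex of the cluster of `p` goes to `βp·y⁻¹` or `βp·y⁻³`. -/
lemma iso_img (hg : HG x y) (hα : Function.Bijective α) (hβ : Function.Bijective β)
    (H : ∀ g h : G, g⁻¹ * h ∈ SS x y ↔ (α g)⁻¹ * β h ∈ SS x y) (p c : G)
    (hc : c⁻¹ * p ∈ SS x y)
    (hiso : ∀ c', c'⁻¹ * p ∈ SS x y → c' ≠ c → ¬ Eg x y c c') :
    α c = β p * y⁻¹ ∨ α c = β p * (y ^ 3)⁻¹ := by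
  have tne : ∀ (r : G) (u v : F), FreeGroup.norm u ≤ 10 → FreeGroup.norm v ≤ 10 → u ≠ v →
      ∀ a b : G, r * pim x y u = a → r * pim x y v = b → a ≠ b := by
    intro r u v hu hv huv a b ha hb h
    exact pne hg u v hu hv huv rfl rfl (mul_left_cancel ((ha.trans h).trans hb.symm))
  have hc' := (H c p).mp hc
  have main : ∀ nb, nb⁻¹ * β p ∈ SS x y → nb ≠ α c → Eg x y (α c) nb → False := by
    intro nb hnbm hne hEnb
    obtain ⟨c', hc'm, hac'⟩ := hsur_cl hα H p nb hnbm
    have hcne : c' ≠ c := by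
      rintro rfl
      exact hne hac'.symm
    exact hiso c' hc'm hcne (Eg_pullback hβ H (by rw [hac']; exact hEnb))
  rcases (mem_cluster_iff (β p) (α c)).mp hc' with h | h | h | h | h | h
  · exfalso
    refine main (β p * x⁻¹) (clmem_x (β p)) ?_ ?_
    · rw [h]
      exact (tne (β p) 1 XX⁻¹ (by decide) (by decide) (by decide) _ _ (by simp) (by simp)).symm
    · rw [h]
      exact Eg_symm (Eg_x' hg _ _ (by group))
  · exfalso
    refine main (β p) (clmem_one (β p)) ?_ ?_
    · rw [h]
      exact tne (β p) 1 XX⁻¹ (by decide) (by decide) (by decide) _ _ (by simp) (by simp)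
    · rw [h]
      exact Eg_x' hg _ _ (by group)
  · exfalso
    refine main (β p) (clmem_one (β p)) ?_ ?_
    · rw [h]
      exact tne (β p) 1 (XX^2)⁻¹ (by decide) (by decide) (by decide) _ _ (by simp) (by simp)
    · rw [h]
      exact Eg_x2' hg _ _ (by group)
  · exfalso
    refine main (β p * (x^2)⁻¹) (clmem_x2 (β p)) ?_ ?_
    · rw [h]
      exact tne (β p) (XX^2)⁻¹ (XX^4)⁻¹ (by decide) (by decide) (by decide) _ _ (by simp) (by simp)
    · rw [h]
      exact Eg_x2' hg _ _ (by group)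
  · exact Or.inl h
  · exact Or.inr h


theorem PC (hg : HG x y) (hα : Function.Bijective α) (hβ : Function.Bijective β)
    (H : ∀ g h : G, g⁻¹ * h ∈ SS x y ↔ (α g)⁻¹ * β h ∈ SS x y) (p : G) :
    α (p * (x^2)⁻¹) = β p * (x^2)⁻¹ ∧ α (p * (x^4)⁻¹) = β p * (x^4)⁻¹ ∧
    ((α p = β p ∧ α (p * x⁻¹) = β p * x⁻¹) ∨ (α p = β p * x⁻¹ ∧ α (p * x⁻¹) = β p)) ∧
    ((α (p * y⁻¹) = β p * y⁻¹ ∧ α (p * (y^3)⁻¹) = β p * (y^3)⁻¹) ∨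
     (α (p * y⁻¹) = β p * (y^3)⁻¹ ∧ α (p * (y^3)⁻¹) = β p * y⁻¹)) := by
  have tne : ∀ (r : G) (u v : F), FreeGroup.norm u ≤ 10 → FreeGroup.norm v ≤ 10 → u ≠ v →
      ∀ a b : G, r * pim x y u = a → r * pim x y v = b → a ≠ b := by
    intro r u v hu hv huv a b ha hb h
    exact pne hg u v hu hv huv rfl rfl (mul_left_cancel ((ha.trans h).trans hb.symm))
  -- distinctness facts on both sides
  have n1 : β p ≠ β p * x⁻¹ :=
    tne (β p) 1 XX⁻¹ (by decide) (by decide) (by decide) _ _ (by simp) (by simp)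
  have n2 : β p ≠ β p * (x^2)⁻¹ :=
    tne (β p) 1 (XX^2)⁻¹ (by decide) (by decide) (by decide) _ _ (by simp) (by simp)
  have n3 : β p * x⁻¹ ≠ β p * (x^2)⁻¹ :=
    tne (β p) XX⁻¹ (XX^2)⁻¹ (by decide) (by decide) (by decide) _ _ (by simp) (by simp)
  have m01 : p ≠ p * x⁻¹ :=
    tne p 1 XX⁻¹ (by decide) (by decide) (by decide) _ _ (by simp) (by simp)
  have m02 : p ≠ p * (x^2)⁻¹ :=
    tne p 1 (XX^2)⁻¹ (by decide) (by decide) (by decide) _ _ (by simp) (by simp)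
  have m04 : p ≠ p * (x^4)⁻¹ :=
    tne p 1 (XX^4)⁻¹ (by decide) (by decide) (by decide) _ _ (by simp) (by simp)
  have m0y : p ≠ p * y⁻¹ :=
    tne p 1 YY⁻¹ (by decide) (by decide) (by decide) _ _ (by simp) (by simp)
  have m0y3 : p ≠ p * (y^3)⁻¹ :=
    tne p 1 (YY^3)⁻¹ (by decide) (by decide) (by decide) _ _ (by simp) (by simp)
  have m12 : p * x⁻¹ ≠ p * (x^2)⁻¹ :=
    tne p XX⁻¹ (XX^2)⁻¹ (by decide) (by decide) (by decide) _ _ (by simp) (by simp)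
  have m14 : p * x⁻¹ ≠ p * (x^4)⁻¹ :=
    tne p XX⁻¹ (XX^4)⁻¹ (by decide) (by decide) (by decide) _ _ (by simp) (by simp)
  have m1y : p * x⁻¹ ≠ p * y⁻¹ :=
    tne p XX⁻¹ YY⁻¹ (by decide) (by decide) (by decide) _ _ (by simp) (by simp)
  have m1y3 : p * x⁻¹ ≠ p * (y^3)⁻¹ :=
    tne p XX⁻¹ (YY^3)⁻¹ (by decide) (by decide) (by decide) _ _ (by simp) (by simp)
  have m24 : p * (x^2)⁻¹ ≠ p * (x^4)⁻¹ :=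
    tne p (XX^2)⁻¹ (XX^4)⁻¹ (by decide) (by decide) (by decide) _ _ (by simp) (by simp)
  have m2y : p * (x^2)⁻¹ ≠ p * y⁻¹ :=
    tne p (XX^2)⁻¹ YY⁻¹ (by decide) (by decide) (by decide) _ _ (by simp) (by simp)
  have m2y3 : p * (x^2)⁻¹ ≠ p * (y^3)⁻¹ :=
    tne p (XX^2)⁻¹ (YY^3)⁻¹ (by decide) (by decide) (by decide) _ _ (by simp) (by simp)
  have m4y : p * (x^4)⁻¹ ≠ p * y⁻¹ :=
    tne p (XX^4)⁻¹ YY⁻¹ (by decide) (by decide) (by decide) _ _ (by simp) (by simp)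
  have m4y3 : p * (x^4)⁻¹ ≠ p * (y^3)⁻¹ :=
    tne p (XX^4)⁻¹ (YY^3)⁻¹ (by decide) (by decide) (by decide) _ _ (by simp) (by simp)
  have myy3 : p * y⁻¹ ≠ p * (y^3)⁻¹ :=
    tne p YY⁻¹ (YY^3)⁻¹ (by decide) (by decide) (by decide) _ _ (by simp) (by simp)
  -- the two isolated vertices
  have hw1 : α (p * y⁻¹) = β p * y⁻¹ ∨ α (p * y⁻¹) = β p * (y ^ 3)⁻¹ := by
    refine iso_img hg hα hβ H p _ (clmem_y p) ?_
    intro c' hm hne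
    rcases (mem_cluster_iff p c').mp hm with rfl | rfl | rfl | rfl | rfl | rfl
    · exact notEg hg YY (by decide) (by decide)
        (by simp only [map_mul, map_inv, map_pow, piX, piY, map_one]; group)
    · exact notEg hg (YY * XX⁻¹) (by decide) (by decide)
        (by simp only [map_mul, map_inv, map_pow, piX, piY, map_one]; group)
    · exact notEg hg (YY * (XX^2)⁻¹) (by decide) (by decide)
        (by simp only [map_mul, map_inv, map_pow, piX, piY, map_one]; group)
    · exact notEg hg (YY * (XX^4)⁻¹) (by decide) (by decide)
        (by simp only [map_mul, map_inv, map_pow, piX, piY, map_one]; group)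
    · exact absurd rfl hne
    · exact notEg hg (YY * (YY^3)⁻¹) (by decide) (by decide)
        (by simp only [map_mul, map_inv, map_pow, piX, piY, map_one]; group)
  have hw3 : α (p * (y^3)⁻¹) = β p * y⁻¹ ∨ α (p * (y^3)⁻¹) = β p * (y ^ 3)⁻¹ := by
    refine iso_img hg hα hβ H p _ (clmem_y3 p) ?_
    intro c' hm hne
    rcases (mem_cluster_iff p c').mp hm with rfl | rfl | rfl | rfl | rfl | rfl
    · exact notEg hg (YY^3) (by decide) (by decide)
        (by simp only [map_mul, map_inv, map_pow, piX, piY, map_one]; group)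
    · exact notEg hg (YY^3 * XX⁻¹) (by decide) (by decide)
        (by simp only [map_mul, map_inv, map_pow, piX, piY, map_one]; group)
    · exact notEg hg (YY^3 * (XX^2)⁻¹) (by decide) (by decide)
        (by simp only [map_mul, map_inv, map_pow, piX, piY, map_one]; group)
    · exact notEg hg (YY^3 * (XX^4)⁻¹) (by decide) (by decide)
        (by simp only [map_mul, map_inv, map_pow, piX, piY, map_one]; group)
    · exact notEg hg (YY^3 * YY⁻¹) (by decide) (by decide)
        (by simp only [map_mul, map_inv, map_pow, piX, piY, map_one]; group)
    · exact absurd rfl hne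
  -- pigeonhole: other cluster members cannot land on the isolated images
  have hpig : ∀ c, c ≠ p * y⁻¹ → c ≠ p * (y^3)⁻¹ →
      α c ≠ β p * y⁻¹ ∧ α c ≠ β p * (y^3)⁻¹ := by
    intro c hne1 hne3
    constructor
    · intro h
      rcases hw1 with h1 | h1
      · exact hne1 (hα.1 (h.trans h1.symm))
      · rcases hw3 with h3 | h3
        · exact hne3 (hα.1 (h.trans h3.symm))
        · exact myy3 (hα.1 (h1.trans h3.symm))
    · intro h
      rcases hw3 with h3 | h3
      · rcases hw1 with h1 | h1
        · exact myy3 (hα.1 (h1.trans h3.symm))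
        · exact hne1 (hα.1 (h.trans h1.symm))
      · exact hne3 (hα.1 (h.trans h3.symm))
  -- the pendant vertex
  have hEc42 : Eg x y (p * (x^4)⁻¹) (p * (x^2)⁻¹) := Eg_x2' hg _ _ (by group)
  have hv4 : α (p * (x^4)⁻¹) = β p * (x^4)⁻¹ := by
    have hm4 : (p * (x^4)⁻¹)⁻¹ * p ∈ SS x y := clmem_x4 p
    have himg4 := (H _ p).mp hm4
    have huniq : ∀ c', c'⁻¹ * p ∈ SS x y → c' ≠ p * (x^4)⁻¹ →
        Eg x y (p * (x^4)⁻¹) c' → c' = p * (x^2)⁻¹ := by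
      intro c' hm hne hE
      rcases (mem_cluster_iff p c').mp hm with rfl | rfl | rfl | rfl | rfl | rfl
      · exact absurd hE (notEg hg (XX^4) (by decide) (by decide)
          (by simp only [map_mul, map_inv, map_pow, piX, piY, map_one]; group))
      · exact absurd hE (notEg hg (XX^4 * XX⁻¹) (by decide) (by decide)
          (by simp only [map_mul, map_inv, map_pow, piX, piY, map_one]; group))
      · rfl
      · exact absurd rfl hne
      · exact absurd hE (notEg hg (XX^4 * YY⁻¹) (by decide) (by decide)
          (by simp only [map_mul, map_inv, map_pow, piX, piY, map_one]; group))
      · exact absurd hE (notEg hg (XX^4 * (YY^3)⁻¹) (by decide) (by decide)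
          (by simp only [map_mul, map_inv, map_pow, piX, piY, map_one]; group))
    have hprod : ∀ nb1 nb2 : G, nb1⁻¹ * β p ∈ SS x y → nb2⁻¹ * β p ∈ SS x y → nb1 ≠ nb2 →
        Eg x y (α (p * (x^4)⁻¹)) nb1 → Eg x y (α (p * (x^4)⁻¹)) nb2 →
        α (p * (x^4)⁻¹) ≠ nb1 → α (p * (x^4)⁻¹) ≠ nb2 → False := by
      intro nb1 nb2 hm1 hm2 hne hE1 hE2 hx1 hx2
      obtain ⟨c1, hc1m, hac1⟩ := hsur_cl hα H p nb1 hm1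
      obtain ⟨c2, hc2m, hac2⟩ := hsur_cl hα H p nb2 hm2
      have h1 : c1 = p * (x^2)⁻¹ := by
        refine huniq c1 hc1m ?_ (Eg_pullback hβ H (by rw [hac1]; exact hE1))
        rintro rfl
        exact hx1 hac1
      have h2 : c2 = p * (x^2)⁻¹ := by
        refine huniq c2 hc2m ?_ (Eg_pullback hβ H (by rw [hac2]; exact hE2))
        rintro rfl
        exact hx2 hac2
      rw [← hac1, ← hac2, h1, h2] at hne
      exact hne rfl
    rcases (mem_cluster_iff (β p) (α (p * (x^4)⁻¹))).mp himg4 with h | h | h | h | h | h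
    · exfalso
      refine hprod (β p * x⁻¹) (β p * (x^2)⁻¹) (clmem_x _) (clmem_x2 _) n3 ?_ ?_ ?_ ?_
      · rw [h]; exact Eg_symm (Eg_x' hg _ _ (by group))
      · rw [h]; exact Eg_symm (Eg_x2' hg _ _ (by group))
      · rw [h]; exact n1
      · rw [h]; exact n2
    · exfalso
      refine hprod (β p) (β p * (x^2)⁻¹) (clmem_one _) (clmem_x2 _) n2 ?_ ?_ ?_ ?_
      · rw [h]; exact Eg_x' hg _ _ (by group)
      · rw [h]; exact Eg_symm (Eg_x' hg _ _ (by group))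
      · rw [h]; exact n1.symm
      · rw [h]; exact n3
    · exfalso
      refine hprod (β p) (β p * x⁻¹) (clmem_one _) (clmem_x _) n1 ?_ ?_ ?_ ?_
      · rw [h]; exact Eg_x2' hg _ _ (by group)
      · rw [h]; exact Eg_x' hg _ _ (by group)
      · rw [h]; exact n2.symm
      · rw [h]; exact n3.symm
    · exact h
    · exact absurd h (hpig _ m4y m4y3).1
    · exact absurd h (hpig _ m4y m4y3).2
  -- the degree three vertex
  have hv2 : α (p * (x^2)⁻¹) = β p * (x^2)⁻¹ := by
    have hm2 : (p * (x^2)⁻¹)⁻¹ * p ∈ SS x y := clmem_x2 p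
    have himg2 := (H _ p).mp hm2
    have hEv : Eg x y (β p * (x^4)⁻¹) (α (p * (x^2)⁻¹)) := by
      have := Eg_transfer hβ H hEc42
      rw [hv4] at this
      exact this
    rcases (mem_cluster_iff (β p) (α (p * (x^2)⁻¹))).mp himg2 with h | h | h | h | h | h
    · rw [h] at hEv
      exact absurd hEv (notEg hg (XX^4) (by decide) (by decide)
        (by simp only [map_mul, map_inv, map_pow, piX, piY, map_one]; group))
    · rw [h] at hEv
      exact absurd hEv (notEg hg (XX^4 * XX⁻¹) (by decide) (by decide)
        (by simp only [map_mul, map_inv, map_pow, piX, piY, map_one]; group))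
    · exact h
    · exact absurd (hα.1 (h.trans hv4.symm)) m24
    · exact absurd h (hpig _ m2y m2y3).1
    · exact absurd h (hpig _ m2y m2y3).2
  -- the two remaining vertices
  have hv0 : α p = β p ∨ α p = β p * x⁻¹ := by
    have hm0 : p⁻¹ * p ∈ SS x y := clmem_one p
    have himg0 := (H p p).mp hm0
    rcases (mem_cluster_iff (β p) (α p)).mp himg0 with h | h | h | h | h | h
    · exact Or.inl h
    · exact Or.inr h
    · exact absurd (hα.1 (h.trans hv2.symm)) m02
    · exact absurd (hα.1 (h.trans hv4.symm)) m04
    · exact absurd h (hpig _ m0y m0y3).1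
    · exact absurd h (hpig _ m0y m0y3).2
  have hv1 : α (p * x⁻¹) = β p ∨ α (p * x⁻¹) = β p * x⁻¹ := by
    have hm1 : (p * x⁻¹)⁻¹ * p ∈ SS x y := clmem_x p
    have himg1 := (H _ p).mp hm1
    rcases (mem_cluster_iff (β p) (α (p * x⁻¹))).mp himg1 with h | h | h | h | h | h
    · exact Or.inl h
    · exact Or.inr h
    · exact absurd (hα.1 (h.trans hv2.symm)) m12
    · exact absurd (hα.1 (h.trans hv4.symm)) m14
    · exact absurd h (hpig _ m1y m1y3).1
    · exact absurd h (hpig _ m1y m1y3).2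
  refine ⟨hv2, hv4, ?_, ?_⟩
  · rcases hv0 with h0 | h0 <;> rcases hv1 with h1 | h1
    · exact absurd (hα.1 (h0.trans h1.symm)) m01
    · exact Or.inl ⟨h0, h1⟩
    · exact Or.inr ⟨h0, h1⟩
    · exact absurd (hα.1 (h0.trans h1.symm)) m01
  · rcases hw1 with h1 | h1 <;> rcases hw3 with h3 | h3
    · exact absurd (hα.1 (h1.trans h3.symm)) myy3
    · exact Or.inl ⟨h1, h3⟩
    · exact Or.inr ⟨h1, h3⟩
    · exact absurd (hα.1 (h1.trans h3.symm)) myy3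


lemma hsur_pt (hβ : Function.Bijective β)
    (H : ∀ g h : G, g⁻¹ * h ∈ SS x y ↔ (α g)⁻¹ * β h ∈ SS x y) (g : G) :
    ∀ a', (α g)⁻¹ * a' ∈ SS x y → ∃ a, g⁻¹ * a ∈ SS x y ∧ β a = a' := by
  intro a' ham
  obtain ⟨a, rfl⟩ := hβ.2 a'
  exact ⟨a, (H g a).mpr ham, rfl⟩

/-- an isolated point of the translate of `g` goes to `αg·y` or `αg·y³`. -/
lemma iso_img_pt (hg : HG x y) (hα : Function.Bijective α) (hβ : Function.Bijective β)
    (H : ∀ g h : G, g⁻¹ * h ∈ SS x y ↔ (α g)⁻¹ * β h ∈ SS x y) (g c : G)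
    (hc : g⁻¹ * c ∈ SS x y)
    (hiso : ∀ c', g⁻¹ * c' ∈ SS x y → c' ≠ c → ¬ Ep x y c c') :
    β c = α g * y ∨ β c = α g * y ^ 3 := by
  have tne : ∀ (r : G) (u v : F), FreeGroup.norm u ≤ 10 → FreeGroup.norm v ≤ 10 → u ≠ v →
      ∀ a b : G, r * pim x y u = a → r * pim x y v = b → a ≠ b := by
    intro r u v hu hv huv a b ha hb h
    exact pne hg u v hu hv huv rfl rfl (mul_left_cancel ((ha.trans h).trans hb.symm))
  have hc' := (H g c).mp hc
  have main : ∀ nb, (α g)⁻¹ * nb ∈ SS x y → nb ≠ β c → Ep x y (β c) nb → False := by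
    intro nb hnbm hne hEnb
    obtain ⟨c', hc'm, hbc'⟩ := hsur_pt hβ H g nb hnbm
    have hcne : c' ≠ c := by
      rintro rfl
      exact hne hbc'.symm
    exact hiso c' hc'm hcne (Ep_pullback hα H (by rw [hbc']; exact hEnb))
  rcases (mem_points_iff (α g) (β c)).mp hc' with h | h | h | h | h | h
  · exfalso
    refine main (α g * x) (ptmem_x (α g)) ?_ ?_
    · rw [h]
      exact (tne (α g) 1 XX (by decide) (by decide) (by decide) _ _ (by simp) (by simp)).symm
    · rw [h]
      exact Ep_x' hg _ _ rfl
  · exfalso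
    refine main (α g) (ptmem_one (α g)) ?_ ?_
    · rw [h]
      exact tne (α g) 1 XX (by decide) (by decide) (by decide) _ _ (by simp) (by simp)
    · rw [h]
      exact Ep_symm (Ep_x' hg _ _ rfl)
  · exfalso
    refine main (α g) (ptmem_one (α g)) ?_ ?_
    · rw [h]
      exact tne (α g) 1 (XX^2) (by decide) (by decide) (by decide) _ _ (by simp) (by simp)
    · rw [h]
      exact Ep_symm (Ep_x2' hg _ _ rfl)
  · exfalso
    refine main (α g * x^2) (ptmem_x2 (α g)) ?_ ?_
    · rw [h]
      exact tne (α g) (XX^2) (XX^4) (by decide) (by decide) (by decide) _ _ (by simp) (by simp)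
    · rw [h]
      exact Ep_symm (Ep_x2' hg _ _ (by group))
  · exact Or.inl h
  · exact Or.inr h

theorem TC (hg : HG x y) (hα : Function.Bijective α) (hβ : Function.Bijective β)
    (H : ∀ g h : G, g⁻¹ * h ∈ SS x y ↔ (α g)⁻¹ * β h ∈ SS x y) (g : G) :
    β (g * x^2) = α g * x^2 ∧ β (g * x^4) = α g * x^4 ∧
    ((β g = α g ∧ β (g * x) = α g * x) ∨ (β g = α g * x ∧ β (g * x) = α g)) ∧
    ((β (g * y) = α g * y ∧ β (g * y^3) = α g * y^3) ∨
     (β (g * y) = α g * y^3 ∧ β (g * y^3) = α g * y)) := by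
  have tne : ∀ (r : G) (u v : F), FreeGroup.norm u ≤ 10 → FreeGroup.norm v ≤ 10 → u ≠ v →
      ∀ a b : G, r * pim x y u = a → r * pim x y v = b → a ≠ b := by
    intro r u v hu hv huv a b ha hb h
    exact pne hg u v hu hv huv rfl rfl (mul_left_cancel ((ha.trans h).trans hb.symm))
  have n1 : α g ≠ α g * x :=
    tne (α g) 1 XX (by decide) (by decide) (by decide) _ _ (by simp) (by simp)
  have n2 : α g ≠ α g * x^2 :=
    tne (α g) 1 (XX^2) (by decide) (by decide) (by decide) _ _ (by simp) (by simp)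
  have n3 : α g * x ≠ α g * x^2 :=
    tne (α g) XX (XX^2) (by decide) (by decide) (by decide) _ _ (by simp) (by simp)
  have m01 : g ≠ g * x :=
    tne g 1 XX (by decide) (by decide) (by decide) _ _ (by simp) (by simp)
  have m02 : g ≠ g * x^2 :=
    tne g 1 (XX^2) (by decide) (by decide) (by decide) _ _ (by simp) (by simp)
  have m04 : g ≠ g * x^4 :=
    tne g 1 (XX^4) (by decide) (by decide) (by decide) _ _ (by simp) (by simp)
  have m0y : g ≠ g * y :=
    tne g 1 YY (by decide) (by decide) (by decide) _ _ (by simp) (by simp)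
  have m0y3 : g ≠ g * y^3 :=
    tne g 1 (YY^3) (by decide) (by decide) (by decide) _ _ (by simp) (by simp)
  have m12 : g * x ≠ g * x^2 :=
    tne g XX (XX^2) (by decide) (by decide) (by decide) _ _ (by simp) (by simp)
  have m14 : g * x ≠ g * x^4 :=
    tne g XX (XX^4) (by decide) (by decide) (by decide) _ _ (by simp) (by simp)
  have m1y : g * x ≠ g * y :=
    tne g XX YY (by decide) (by decide) (by decide) _ _ (by simp) (by simp)
  have m1y3 : g * x ≠ g * y^3 :=
    tne g XX (YY^3) (by decide) (by decide) (by decide) _ _ (by simp) (by simp)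
  have m24 : g * x^2 ≠ g * x^4 :=
    tne g (XX^2) (XX^4) (by decide) (by decide) (by decide) _ _ (by simp) (by simp)
  have m2y : g * x^2 ≠ g * y :=
    tne g (XX^2) YY (by decide) (by decide) (by decide) _ _ (by simp) (by simp)
  have m2y3 : g * x^2 ≠ g * y^3 :=
    tne g (XX^2) (YY^3) (by decide) (by decide) (by decide) _ _ (by simp) (by simp)
  have m4y : g * x^4 ≠ g * y :=
    tne g (XX^4) YY (by decide) (by decide) (by decide) _ _ (by simp) (by simp)
  have m4y3 : g * x^4 ≠ g * y^3 :=
    tne g (XX^4) (YY^3) (by decide) (by decide) (by decide) _ _ (by simp) (by simp)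
  have myy3 : g * y ≠ g * y^3 :=
    tne g YY (YY^3) (by decide) (by decide) (by decide) _ _ (by simp) (by simp)
  have hw1 : β (g * y) = α g * y ∨ β (g * y) = α g * y ^ 3 := by
    refine iso_img_pt hg hα hβ H g _ (ptmem_y g) ?_
    intro c' hm hne
    rcases (mem_points_iff g c').mp hm with rfl | rfl | rfl | rfl | rfl | rfl
    · exact notEp hg YY⁻¹ (by decide) (by decide)
        (by simp only [map_mul, map_inv, map_pow, piX, piY, map_one]; group)
    · exact notEp hg (YY⁻¹ * XX) (by decide) (by decide)
        (by simp only [map_mul, map_inv, map_pow, piX, piY, map_one]; group)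
    · exact notEp hg (YY⁻¹ * XX^2) (by decide) (by decide)
        (by simp only [map_mul, map_inv, map_pow, piX, piY, map_one]; group)
    · exact notEp hg (YY⁻¹ * XX^4) (by decide) (by decide)
        (by simp only [map_mul, map_inv, map_pow, piX, piY, map_one]; group)
    · exact absurd rfl hne
    · exact notEp hg (YY⁻¹ * YY^3) (by decide) (by decide)
        (by simp only [map_mul, map_inv, map_pow, piX, piY, map_one]; group)
  have hw3 : β (g * y^3) = α g * y ∨ β (g * y^3) = α g * y ^ 3 := by
    refine iso_img_pt hg hα hβ H g _ (ptmem_y3 g) ?_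
    intro c' hm hne
    rcases (mem_points_iff g c').mp hm with rfl | rfl | rfl | rfl | rfl | rfl
    · exact notEp hg (YY^3)⁻¹ (by decide) (by decide)
        (by simp only [map_mul, map_inv, map_pow, piX, piY, map_one]; group)
    · exact notEp hg ((YY^3)⁻¹ * XX) (by decide) (by decide)
        (by simp only [map_mul, map_inv, map_pow, piX, piY, map_one]; group)
    · exact notEp hg ((YY^3)⁻¹ * XX^2) (by decide) (by decide)
        (by simp only [map_mul, map_inv, map_pow, piX, piY, map_one]; group)
    · exact notEp hg ((YY^3)⁻¹ * XX^4) (by decide) (by decide)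
        (by simp only [map_mul, map_inv, map_pow, piX, piY, map_one]; group)
    · exact notEp hg ((YY^3)⁻¹ * YY) (by decide) (by decide)
        (by simp only [map_mul, map_inv, map_pow, piX, piY, map_one]; group)
    · exact absurd rfl hne
  have hpig : ∀ c, c ≠ g * y → c ≠ g * y^3 →
      β c ≠ α g * y ∧ β c ≠ α g * y^3 := by
    intro c hne1 hne3
    constructor
    · intro h
      rcases hw1 with h1 | h1
      · exact hne1 (hβ.1 (h.trans h1.symm))
      · rcases hw3 with h3 | h3
        · exact hne3 (hβ.1 (h.trans h3.symm))
        · exact myy3 (hβ.1 (h1.trans h3.symm))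
    · intro h
      rcases hw3 with h3 | h3
      · rcases hw1 with h1 | h1
        · exact myy3 (hβ.1 (h1.trans h3.symm))
        · exact hne1 (hβ.1 (h.trans h1.symm))
      · exact hne3 (hβ.1 (h.trans h3.symm))
  have hEc42 : Ep x y (g * x^4) (g * x^2) := Ep_symm (Ep_x2' hg _ _ (by group))
  have hv4 : β (g * x^4) = α g * x^4 := by
    have hm4 : g⁻¹ * (g * x^4) ∈ SS x y := ptmem_x4 g
    have himg4 := (H g _).mp hm4
    have huniq : ∀ c', g⁻¹ * c' ∈ SS x y → c' ≠ g * x^4 →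
        Ep x y (g * x^4) c' → c' = g * x^2 := by
      intro c' hm hne hE
      rcases (mem_points_iff g c').mp hm with rfl | rfl | rfl | rfl | rfl | rfl
      · exact absurd hE (notEp hg (XX^4)⁻¹ (by decide) (by decide)
          (by simp only [map_mul, map_inv, map_pow, piX, piY, map_one]; group))
      · exact absurd hE (notEp hg ((XX^4)⁻¹ * XX) (by decide) (by decide)
          (by simp only [map_mul, map_inv, map_pow, piX, piY, map_one]; group))
      · rfl
      · exact absurd rfl hne
      · exact absurd hE (notEp hg ((XX^4)⁻¹ * YY) (by decide) (by decide)
          (by simp only [map_mul, map_inv, map_pow, piX, piY, map_one]; group))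
      · exact absurd hE (notEp hg ((XX^4)⁻¹ * YY^3) (by decide) (by decide)
          (by simp only [map_mul, map_inv, map_pow, piX, piY, map_one]; group))
    have hprod : ∀ nb1 nb2 : G, (α g)⁻¹ * nb1 ∈ SS x y → (α g)⁻¹ * nb2 ∈ SS x y → nb1 ≠ nb2 →
        Ep x y (β (g * x^4)) nb1 → Ep x y (β (g * x^4)) nb2 →
        β (g * x^4) ≠ nb1 → β (g * x^4) ≠ nb2 → False := by
      intro nb1 nb2 hm1 hm2 hne hE1 hE2 hx1 hx2
      obtain ⟨c1, hc1m, hbc1⟩ := hsur_pt hβ H g nb1 hm1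
      obtain ⟨c2, hc2m, hbc2⟩ := hsur_pt hβ H g nb2 hm2
      have h1 : c1 = g * x^2 := by
        refine huniq c1 hc1m ?_ (Ep_pullback hα H (by rw [hbc1]; exact hE1))
        rintro rfl
        exact hx1 hbc1
      have h2 : c2 = g * x^2 := by
        refine huniq c2 hc2m ?_ (Ep_pullback hα H (by rw [hbc2]; exact hE2))
        rintro rfl
        exact hx2 hbc2
      rw [← hbc1, ← hbc2, h1, h2] at hne
      exact hne rfl
    rcases (mem_points_iff (α g) (β (g * x^4))).mp himg4 with h | h | h | h | h | h
    · exfalso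
      refine hprod (α g * x) (α g * x^2) (ptmem_x _) (ptmem_x2 _) n3 ?_ ?_ ?_ ?_
      · rw [h]; exact Ep_x' hg _ _ rfl
      · rw [h]; exact Ep_x2' hg _ _ rfl
      · rw [h]; exact n1
      · rw [h]; exact n2
    · exfalso
      refine hprod (α g) (α g * x^2) (ptmem_one _) (ptmem_x2 _) n2 ?_ ?_ ?_ ?_
      · rw [h]; exact Ep_symm (Ep_x' hg _ _ rfl)
      · rw [h]; exact Ep_x' hg _ _ (by rw [pow_two]; group)
      · rw [h]; exact n1.symm
      · rw [h]; exact n3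
    · exfalso
      refine hprod (α g) (α g * x) (ptmem_one _) (ptmem_x _) n1 ?_ ?_ ?_ ?_
      · rw [h]; exact Ep_symm (Ep_x2' hg _ _ rfl)
      · rw [h]; exact Ep_symm (Ep_x' hg _ _ (by rw [pow_two]; group))
      · rw [h]; exact n2.symm
      · rw [h]; exact n3.symm
    · exact h
    · exact absurd h (hpig _ m4y m4y3).1
    · exact absurd h (hpig _ m4y m4y3).2
  have hv2 : β (g * x^2) = α g * x^2 := by
    have hm2 : g⁻¹ * (g * x^2) ∈ SS x y := ptmem_x2 g
    have himg2 := (H g _).mp hm2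
    have hEv : Ep x y (α g * x^4) (β (g * x^2)) := by
      have := Ep_transfer hα H hEc42
      rw [hv4] at this
      exact this
    rcases (mem_points_iff (α g) (β (g * x^2))).mp himg2 with h | h | h | h | h | h
    · rw [h] at hEv
      exact absurd hEv (notEp hg (XX^4)⁻¹ (by decide) (by decide)
        (by simp only [map_mul, map_inv, map_pow, piX, piY, map_one]; group))
    · rw [h] at hEv
      exact absurd hEv (notEp hg ((XX^4)⁻¹ * XX) (by decide) (by decide)
        (by simp only [map_mul, map_inv, map_pow, piX, piY, map_one]; group))
    · exact h
    · exact absurd (hβ.1 (h.trans hv4.symm)) m24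
    · exact absurd h (hpig _ m2y m2y3).1
    · exact absurd h (hpig _ m2y m2y3).2
  have hv0 : β g = α g ∨ β g = α g * x := by
    have hm0 : g⁻¹ * g ∈ SS x y := clmem_one g
    have himg0 := (H g g).mp hm0
    rcases (mem_points_iff (α g) (β g)).mp himg0 with h | h | h | h | h | h
    · exact Or.inl h
    · exact Or.inr h
    · exact absurd (hβ.1 (h.trans hv2.symm)) m02
    · exact absurd (hβ.1 (h.trans hv4.symm)) m04
    · exact absurd h (hpig _ m0y m0y3).1
    · exact absurd h (hpig _ m0y m0y3).2
  have hv1 : β (g * x) = α g ∨ β (g * x) = α g * x := by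
    have hm1 : g⁻¹ * (g * x) ∈ SS x y := ptmem_x g
    have himg1 := (H g _).mp hm1
    rcases (mem_points_iff (α g) (β (g * x))).mp himg1 with h | h | h | h | h | h
    · exact Or.inl h
    · exact Or.inr h
    · exact absurd (hβ.1 (h.trans hv2.symm)) m12
    · exact absurd (hβ.1 (h.trans hv4.symm)) m14
    · exact absurd h (hpig _ m1y m1y3).1
    · exact absurd h (hpig _ m1y m1y3).2
  refine ⟨hv2, hv4, ?_, ?_⟩
  · rcases hv0 with h0 | h0 <;> rcases hv1 with h1 | h1
    · exact absurd (hβ.1 (h0.trans h1.symm)) m01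
    · exact Or.inl ⟨h0, h1⟩
    · exact Or.inr ⟨h0, h1⟩
    · exact absurd (hβ.1 (h0.trans h1.symm)) m01
  · rcases hw1 with h1 | h1 <;> rcases hw3 with h3 | h3
    · exact absurd (hβ.1 (h1.trans h3.symm)) myy3
    · exact Or.inl ⟨h1, h3⟩
    · exact Or.inr ⟨h1, h3⟩
    · exact absurd (hβ.1 (h1.trans h3.symm)) myy3


variable (hg : HG x y) (hα : Function.Bijective α) (hβ : Function.Bijective β)
    (H : ∀ g h : G, g⁻¹ * h ∈ SS x y ↔ (α g)⁻¹ * β h ∈ SS x y)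

include hg hα hβ H

lemma step_x2 : ∀ p : G, β (p * (x^2)⁻¹) = β p * (x^2)⁻¹ := by
  intro p
  have pc1 := (PC hg hα hβ H (p * (x^2)⁻¹)).1
  have pc2 := (PC hg hα hβ H p).2.1
  have e : p * (x^2)⁻¹ * (x^2)⁻¹ = p * (x^4)⁻¹ := by group
  rw [e] at pc1
  have h3 := pc1.symm.trans pc2
  calc β (p * (x^2)⁻¹) = β (p * (x^2)⁻¹) * (x^2)⁻¹ * x^2 := by group
    _ = β p * (x^4)⁻¹ * x^2 := by rw [h3]
    _ = β p * (x^2)⁻¹ := by group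

lemma alpha_eq_beta : ∀ p : G, α p = β p := by
  intro p
  have pc1 := (PC hg hα hβ H (p * x^2)).1
  have e : p * x^2 * (x^2)⁻¹ = p := by group
  rw [e] at pc1
  have hb := step_x2 hg hα hβ H (p * x^2)
  rw [e] at hb
  exact pc1.trans hb.symm

lemma x_ne_one : x ≠ 1 :=
  pne hg XX 1 (by decide) (by decide) (by decide) (by simp) (by simp)

lemma beta_x : ∀ p : G, β (p * x) = β p * x := by
  have hxinv : ∀ p : G, β (p * x⁻¹) = β p * x⁻¹ := by
    intro p
    rcases (PC hg hα hβ H p).2.2.1 with ⟨h0, h1⟩ | ⟨h0, h1⟩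
    · exact (alpha_eq_beta hg hα hβ H _).symm.trans h1
    · exfalso
      have hbb := (alpha_eq_beta hg hα hβ H p).symm.trans h0
      have : x⁻¹ = 1 := left_eq_mul.mp hbb
      exact x_ne_one hg hα hβ H (inv_eq_one.mp this)
  intro p
  have := hxinv (p * x)
  rw [show p * x * x⁻¹ = p by group] at this
  rw [this]
  group

lemma beta_y : ∀ p : G, β (p * y) = β p * y := by
  intro p
  rcases (TC hg hα hβ H p).2.2.2 with ⟨h1, h3⟩ | ⟨h1, h3⟩
  · rw [alpha_eq_beta hg hα hβ H p] at h1
    exact h1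
  · exfalso
    rw [alpha_eq_beta hg hα hβ H p] at h1 h3
    -- h1 : β (p * y) = β p * y ^ 3, h3 : β (p * y ^ 3) = β p * y
    rcases (PC hg hα hβ H (p * y)).2.2.2 with ⟨k1, k3⟩ | ⟨k1, k3⟩
    · -- k1 : α (p * y * y⁻¹) = β (p * y) * y⁻¹
      rw [show p * y * y⁻¹ = p by group, alpha_eq_beta hg hα hβ H p, h1] at k1
      have : β p = β p * (y^3 * y⁻¹) := by rw [← mul_assoc]; exact k1
      have h5 : y^3 * y⁻¹ = 1 := (left_eq_mul.mp this)
      have : y^3 = y := by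
        have := congrArg (· * y) h5
        simpa [mul_assoc] using this
      exact pne hg (YY^3) YY (by decide) (by decide) (by decide) (by simp) (by simp) this
    · -- k3 : α (p * y * (y^3)⁻¹) = β (p * y) * y⁻¹
      rw [alpha_eq_beta hg hα hβ H (p * y * (y^3)⁻¹), h1] at k3
      -- k3 : β (p * y * (y^3)⁻¹) = β p * y ^ 3 * y⁻¹
      rcases (TC hg hα hβ H (p * y * (y^3)⁻¹)).2.2.2 with ⟨l1, l3⟩ | ⟨l1, l3⟩
      · -- l1 : β (p*y*(y^3)⁻¹ * y) = α (p*y*(y^3)⁻¹) * y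
        rw [show p * y * (y^3)⁻¹ * y = p * y⁻¹ by group,
          alpha_eq_beta hg hα hβ H (p * y * (y^3)⁻¹), k3] at l1
        -- l1 : β (p * y⁻¹) = β p * y ^ 3 * y⁻¹ * y
        have l1' : β (p * y⁻¹) = β p * y^3 := by rw [l1]; group
        have : p * y⁻¹ = p * y := hβ.1 (l1'.trans h1.symm)
        have hyy : y⁻¹ = y := mul_left_cancel this
        refine pne hg YY⁻¹ YY (by decide) (by decide) (by decide) (by simp) (by simp) hyy
      · -- l1 : β (p*y*(y^3)⁻¹ * y) = α (p*y*(y^3)⁻¹) * y^3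
        rw [show p * y * (y^3)⁻¹ * y = p * y⁻¹ by group,
          alpha_eq_beta hg hα hβ H (p * y * (y^3)⁻¹), k3] at l1
        -- l1 : β (p * y⁻¹) = β p * y ^ 3 * y⁻¹ * y ^ 3
        have hs : (α (p * y⁻¹))⁻¹ * β p ∈ SS x y := (H (p * y⁻¹) p).mp (clmem_y p)
        have ht : (α (p * y⁻¹))⁻¹ * β (p * y⁻¹) ∈ SS x y :=
          (H (p * y⁻¹) (p * y⁻¹)).mp (clmem_one (p * y⁻¹))
        rw [l1] at ht
        obtain ⟨st, hstm, hst⟩ := mem_SS_lift hs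
        obtain ⟨tt, httm, htt⟩ := mem_SS_lift ht
        have heq : pim x y (st⁻¹ * tt) = pim x y (YY^5) := by
          rw [map_mul, map_inv, hst, htt]
          simp only [map_pow, piY]
          group
        have hnorm : FreeGroup.norm (st⁻¹ * tt) ≤ 10 := by
          calc FreeGroup.norm (st⁻¹ * tt) ≤ FreeGroup.norm st⁻¹ + FreeGroup.norm tt :=
                FreeGroup.norm_mul_le _ _
          _ ≤ 10 := by
              rw [FreeGroup.norm_inv_eq]
              have := st_norm st hstm; have := st_norm tt httm; omega
        have := inj_of hg hnorm (by decide) heq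
        exact fact_y5 st hstm tt httm this


lemma beta_shift (hgen : Subgroup.closure {x, y} = ⊤) : ∀ (g p : G), β (p * g) = β p * g := by
  let Sub : Subgroup G :=
    { carrier := {g | ∀ p, β (p * g) = β p * g}
      one_mem' := by intro p; rw [mul_one, mul_one]
      mul_mem' := by
        intro a b ha hb p
        rw [← mul_assoc, hb, ha, mul_assoc]
      inv_mem' := by
        intro a ha p
        have := ha (p * a⁻¹)
        rw [show p * a⁻¹ * a = p by group] at this
        rw [this]
        group }
  have hsub : {x, y} ⊆ (Sub : Set G) := by
    rintro z (rfl | rfl)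
    · exact beta_x hg hα hβ H
    · exact beta_y hg hα hβ H
  have htop : (⊤ : Subgroup G) ≤ Sub := by
    rw [← hgen]
    exact (Subgroup.closure_le Sub).mpr hsub
  intro g p
  exact htop (Subgroup.mem_top g) p

end Main

end CayleyAux

namespace CayleyAux

lemma inl_le_inr_iff {G : Type*} [Group G] (S : Set G) (g h : G) :
    @LE.le (CayleyPoset G S) Preorder.toLE (Sum.inl g) (Sum.inr h) ↔ g⁻¹ * h ∈ S :=
  Iff.rfl

lemma not_inr_le_inl {G : Type*} [Group G] (S : Set G) (h g : G) :
    ¬ @LE.le (CayleyPoset G S) Preorder.toLE (Sum.inr h) (Sum.inl g) :=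
  fun hc => hc

lemma inr_le_inr_eq {G : Type*} [Group G] (S : Set G) (h h' : G) :
    @LE.le (CayleyPoset G S) Preorder.toLE (Sum.inr h) (Sum.inr h') → h = h' :=
  fun hc => hc

end CayleyAux


open CayleyAux

/-- If `G` is generated by `x, y` and no non-trivial reduced word of
length at most 21 in the free group of rank 2 evaluates to the identity at `(x, y)`
(i.e. the Cayley graph of `G` w.r.t. `{x,y}` has girth `> 21`), then with
`S = {e, x, x², x⁴, y, y³}` the Cayley poset `P(G,S)` is a Cayley representation of `G`. -/
theorem cayley_rep_of_large_girth (G : Type*) [Group G] (x y : G)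
    (hgen : Subgroup.closure {x, y} = ⊤)
    (hgirth : ∀ w : FreeGroup (Fin 2), w ≠ 1 → (FreeGroup.toWord w).length ≤ 21 →
      FreeGroup.lift ![x, y] w ≠ 1) :
    IsCayleyRep G ({1, x, x ^ 2, x ^ 4, y, y ^ 3} : Set G) := by
  have hg : HG x y := hgirth
  unfold IsCayleyRep
  intro φ
  have hone : ∀ (ψ : CayleyPoset G ({1, x, x ^ 2, x ^ 4, y, y ^ 3} : Set G) ≃o
      CayleyPoset G ({1, x, x ^ 2, x ^ 4, y, y ^ 3} : Set G)) (g : G),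
      ∃ g', ψ (Sum.inl g) = Sum.inl g' := by
    intro ψ g
    cases hz : ψ (Sum.inl g) with
    | inl g' => exact ⟨g', rfl⟩
    | inr h =>
      exfalso
      have hmem : g⁻¹ * g ∈ ({1, x, x ^ 2, x ^ 4, y, y ^ 3} : Set G) := by
        rw [inv_mul_cancel]; exact Set.mem_insert _ _
      have hle2 := ψ.le_iff_le.mpr ((inl_le_inr_iff _ g g).mpr hmem)
      rw [hz] at hle2
      have heq2 : ψ (Sum.inr g) = Sum.inr h := by
        rcases hw : ψ (Sum.inr g) with g'' | h''
        · rw [hw] at hle2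
          exact absurd hle2 (not_inr_le_inl _ _ _)
        · rw [hw] at hle2
          rw [inr_le_inr_eq _ _ _ hle2]
      have := ψ.injective (hz.trans heq2.symm)
      exact Sum.inl_ne_inr this
  have hinr : ∀ (ψ : CayleyPoset G ({1, x, x ^ 2, x ^ 4, y, y ^ 3} : Set G) ≃o
      CayleyPoset G ({1, x, x ^ 2, x ^ 4, y, y ^ 3} : Set G)) (h : G),
      ∃ h', ψ (Sum.inr h) = Sum.inr h' := by
    intro ψ h
    cases hz : ψ (Sum.inr h) with
    | inr h' => exact ⟨h', rfl⟩
    | inl k =>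
      exfalso
      obtain ⟨k', hk'⟩ := hone ψ.symm k
      have h2 := (ψ.symm_apply_apply (Sum.inr h)).symm.trans ((congrArg ψ.symm hz).trans hk')
      exact Sum.inr_ne_inl h2
  choose αf hαf using hone φ
  choose βf hβf using hinr φ
  have hαbij : Function.Bijective αf := by
    constructor
    · intro a b hab
      have : φ (Sum.inl a) = φ (Sum.inl b) := by rw [hαf a, hαf b, hab]
      exact Sum.inl.inj (φ.injective this)
    · intro g'
      obtain ⟨g, hgeq⟩ := hone φ.symm g'
      refine ⟨g, ?_⟩
      have : φ (Sum.inl g) = Sum.inl g' := by rw [← hgeq]; exact φ.apply_symm_apply _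
      exact Sum.inl.inj ((hαf g).symm.trans this)
  have hβbij : Function.Bijective βf := by
    constructor
    · intro a b hab
      have : φ (Sum.inr a) = φ (Sum.inr b) := by rw [hβf a, hβf b, hab]
      exact Sum.inr.inj (φ.injective this)
    · intro h'
      obtain ⟨h, hheq⟩ := hinr φ.symm h'
      refine ⟨h, ?_⟩
      have : φ (Sum.inr h) = Sum.inr h' := by rw [← hheq]; exact φ.apply_symm_apply _
      exact Sum.inr.inj ((hβf h).symm.trans this)
  have H : ∀ g h : G, g⁻¹ * h ∈ ({1, x, x ^ 2, x ^ 4, y, y ^ 3} : Set G) ↔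
      (αf g)⁻¹ * βf h ∈ ({1, x, x ^ 2, x ^ 4, y, y ^ 3} : Set G) := by
    intro g h
    rw [← inl_le_inr_iff ({1, x, x ^ 2, x ^ 4, y, y ^ 3} : Set G) g h,
      ← inl_le_inr_iff ({1, x, x ^ 2, x ^ 4, y, y ^ 3} : Set G) (αf g) (βf h),
      ← hαf g, ← hβf h]
    exact (φ.le_iff_le).symm
  have H2 : ∀ g h : G, g⁻¹ * h ∈ SS x y ↔ (αf g)⁻¹ * βf h ∈ SS x y := H
  have hshift : ∀ (g p : G), βf (p * g) = βf p * g :=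
    beta_shift hg hαbij hβbij H2 hgen
  have hβone : ∀ g : G, βf g = βf 1 * g := by
    intro g
    have := hshift g 1
    rwa [one_mul] at this
  have hαone : ∀ g : G, αf g = βf 1 * g := by
    intro g
    rw [alpha_eq_beta hg hαbij hβbij H2 g]
    exact hβone g
  refine ⟨βf 1, ?_⟩
  intro p
  cases p with
  | inl g =>
    rw [hαf g, hαone g]
    rfl
  | inr h =>
    rw [hβf h, hβone h]
    rfl
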